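/- For n ≥ 5, the quadratic form q(x_1, ..., x_{n-1}) = Σ_{i=1}^{n-1} x_i^2 + Σ_{1 ≤ i < j ≤ n-1} x_i x_j is universal on Z^{n-1}, i.e., every nonnegative integer is represented by q at integer arguments. -/
import Mathlib

open Finset

namespace Stmt6


lemma swap_sum {N : ℕ} (F : Fin N → Fin N → ℤ) :
    ∑ i, ∑ j ∈ Ioi i, F i j = ∑ j, ∑ i ∈ Iio j, F i j := by
  rw [Finset.sum_sigma', Finset.sum_sigma']
  refine Finset.sum_nbij' (fun x => ⟨x.2, x.1⟩) (fun x => ⟨x.2, x.1⟩) ?_ ?_ (fun _ _ => rfl)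
    (fun _ _ => rfl) (fun _ _ => rfl) <;>
  · simp only [Finset.mem_sigma, Finset.mem_Ioi, Finset.mem_Iio, Finset.mem_univ, true_and,
      Sigma.forall]
    exact fun a b h => h

lemma split_sum {N : ℕ} (i : Fin N) (g : Fin N → ℤ) :
    ∑ j, g j = g i + (∑ j ∈ Iio i, g j + ∑ j ∈ Ioi i, g j) := by
  have herase : univ.erase i = Iio i ∪ Ioi i := by
    ext j
    simp only [Finset.mem_erase, Finset.mem_univ, and_true, Finset.mem_union, Finset.mem_Iio,
      Finset.mem_Ioi]
    constructor
    · exact fun h => lt_or_gt_of_ne h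
    · rintro (h | h)
      · exact ne_of_lt h
      · exact ne_of_gt h
  have hdis : Disjoint (Iio i) (Ioi i) := by
    rw [Finset.disjoint_left]
    intro a ha hb
    rw [Finset.mem_Iio] at ha
    rw [Finset.mem_Ioi] at hb
    exact absurd hb (not_lt_of_gt ha)
  rw [← Finset.add_sum_erase _ _ (Finset.mem_univ i), herase, Finset.sum_union hdis]

lemma sq_sum_identity {N : ℕ} (x : Fin N → ℤ) :
    (∑ i, x i) ^ 2 = (∑ i, (x i) ^ 2) + 2 * ∑ i, ∑ j ∈ Ioi i, x i * x j := by
  have h1 : (∑ i, x i) ^ 2 = ∑ i, ∑ j, x i * x j := by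
    rw [sq, Finset.sum_mul_sum]
  have h2 : ∑ i, ∑ j, x i * x j
      = ∑ i, (x i * x i + ((∑ j ∈ Iio i, x i * x j) + ∑ j ∈ Ioi i, x i * x j)) :=
    Finset.sum_congr rfl fun i _ => split_sum i _
  have h3 : ∑ i : Fin N, ∑ j ∈ Iio i, x i * x j = ∑ i, ∑ j ∈ Ioi i, x i * x j := by
    have := swap_sum (fun i j => x j * x i)
    calc ∑ i : Fin N, ∑ j ∈ Iio i, x i * x j
        = ∑ j : Fin N, ∑ i ∈ Iio j, x j * x i := rfl
      _ = ∑ i : Fin N, ∑ j ∈ Ioi i, x j * x i := this.symm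
      _ = ∑ i : Fin N, ∑ j ∈ Ioi i, x i * x j := by
          exact Finset.sum_congr rfl fun i _ => Finset.sum_congr rfl fun j _ => mul_comm _ _
  rw [h1, h2, Finset.sum_add_distrib, Finset.sum_add_distrib, h3]
  have h4 : ∑ i : Fin N, x i * x i = ∑ i, (x i) ^ 2 :=
    Finset.sum_congr rfl fun i _ => (sq (x i)).symm
  rw [h4]; ring

lemma bridge {N : ℕ} (x : Fin N → ℤ) (k : ℤ)
    (h : (∑ i, x i) ^ 2 + ∑ i, (x i) ^ 2 = 2 * k) :
    (∑ i, (x i) ^ 2) + (∑ i, ∑ j ∈ Ioi i, x i * x j) = k := by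
  have h1 := sq_sum_identity x
  linarith

def vec (N : ℕ) (a b c d : ℤ) : Fin N → ℤ := fun i =>
  if i.1 = 0 then a else if i.1 = 1 then b else if i.1 = 2 then c else if i.1 = 3 then d else 0

lemma sum_vec {N : ℕ} (hN : 4 ≤ N) (a b c d : ℤ) (g : ℤ → ℤ) (hg : g 0 = 0) :
    ∑ i : Fin N, g (vec N a b c d i) = g a + g b + g c + g d := by
  have hfun : ∀ i : Fin N, g (vec N a b c d i) =
      (fun m : ℕ => g (if m = 0 then a else if m = 1 then b else if m = 2 then c
        else if m = 3 then d else 0)) i.1 := fun i => rfl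
  rw [Finset.sum_congr rfl fun i _ => hfun i,
    Fin.sum_univ_eq_sum_range (fun m : ℕ => g (if m = 0 then a else if m = 1 then b
      else if m = 2 then c else if m = 3 then d else 0)) N]
  rw [← Finset.sum_subset (Finset.range_subset_range.mpr hN)
    (fun x _ hx => by
      rw [Finset.mem_range, not_lt] at hx
      have h0 : ¬ (x = 0) := by omega
      have h1 : ¬ (x = 1) := by omega
      have h2 : ¬ (x = 2) := by omega
      have h3 : ¬ (x = 3) := by omega
      simp [h0, h1, h2, h3, hg])]
  rw [show (4 : ℕ) = 3 + 1 from rfl, Finset.sum_range_succ, Finset.sum_range_succ,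
    Finset.sum_range_succ, Finset.sum_range_succ, Finset.sum_range_zero]
  norm_num

lemma realize {N : ℕ} (hN : 4 ≤ N) (k : ℤ) (a b c d : ℤ)
    (h : (a + b + c + d) ^ 2 + (a ^ 2 + b ^ 2 + c ^ 2 + d ^ 2) = 2 * k) :
    ∃ x : Fin N → ℤ, (∑ i, (x i) ^ 2) + (∑ i, ∑ j ∈ Ioi i, x i * x j) = k := by
  refine ⟨vec N a b c d, bridge _ _ ?_⟩
  have hs : ∑ i : Fin N, vec N a b c d i = a + b + c + d := by
    have := sum_vec hN a b c d id rfl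
    simpa using this
  have hsq : ∑ i : Fin N, (vec N a b c d i) ^ 2 = a ^ 2 + b ^ 2 + c ^ 2 + d ^ 2 := by
    have := sum_vec hN a b c d (fun t => t ^ 2) (by norm_num)
    simpa using this
  rw [hs, hsq]; exact h



lemma near_mult (t x : ℤ) (ht : 0 < t) : ∃ m r : ℤ, x = t * m + r ∧ 4 * r ^ 2 ≤ t ^ 2 := by
  have h1 : 0 ≤ x % t := Int.emod_nonneg x (ne_of_gt ht)
  have h2 : x % t < t := Int.emod_lt_of_pos x ht
  have hx : x = t * (x / t) + x % t := (Int.mul_ediv_add_emod x t).symm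
  by_cases hc : 2 * (x % t) ≤ t
  · exact ⟨x / t, x % t, hx, by nlinarith⟩
  · refine ⟨x / t + 1, x % t - t, by linarith [hx], by nlinarith⟩

lemma dc_aux (n : ℕ) : ∀ T : ℕ, ∀ t x y z : ℤ, t.natAbs ≤ T → 0 < t →
    x ^ 2 + y ^ 2 + z ^ 2 = (n : ℤ) * t ^ 2 → ∃ a b c : ℤ, a ^ 2 + b ^ 2 + c ^ 2 = (n : ℤ) := by
  intro T
  induction T with
  | zero => intro t x y z hT ht _; omega
  | succ T IH =>
    intro t x y z hT ht h
    by_cases ht1 : t = 1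
    · subst ht1; exact ⟨x, y, z, by linarith [h]⟩
    obtain ⟨m1, r1, hr1, hb1⟩ := near_mult t x ht
    obtain ⟨m2, r2, hr2, hb2⟩ := near_mult t y ht
    obtain ⟨m3, r3, hr3, hb3⟩ := near_mult t z ht
    have e1 : r1 = x - t * m1 := by linarith
    have e2 : r2 = y - t * m2 := by linarith
    have e3 : r3 = z - t * m3 := by linarith
    rw [e1] at hb1; rw [e2] at hb2; rw [e3] at hb3
    set M : ℤ := m1 ^ 2 + m2 ^ 2 + m3 ^ 2 with hM
    set t' : ℤ := (n : ℤ) * t - 2 * (x * m1 + y * m2 + z * m3) + t * M with ht'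
    have hu : t * t' = (x - t * m1) ^ 2 + (y - t * m2) ^ 2 + (z - t * m3) ^ 2 := by
      rw [ht', hM]; linear_combination -h
    by_cases hz : t' = 0
    · have h0 : (x - t * m1) ^ 2 + (y - t * m2) ^ 2 + (z - t * m3) ^ 2 = 0 := by
        rw [← hu, hz, mul_zero]
      have ha : (x - t * m1) ^ 2 = 0 := by
        linarith [sq_nonneg (x - t * m1), sq_nonneg (y - t * m2), sq_nonneg (z - t * m3)]
      have hb : (y - t * m2) ^ 2 = 0 := by
        linarith [sq_nonneg (x - t * m1), sq_nonneg (y - t * m2), sq_nonneg (z - t * m3)]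
      have hcc : (z - t * m3) ^ 2 = 0 := by
        linarith [sq_nonneg (x - t * m1), sq_nonneg (y - t * m2), sq_nonneg (z - t * m3)]
      have hx0 : x - t * m1 = 0 := by
        exact pow_eq_zero_iff (two_ne_zero) |>.mp ha
      have hy0 : y - t * m2 = 0 := by
        exact pow_eq_zero_iff (two_ne_zero) |>.mp hb
      have hz0 : z - t * m3 = 0 := by
        exact pow_eq_zero_iff (two_ne_zero) |>.mp hcc
      refine ⟨m1, m2, m3, ?_⟩
      have ht2 : t ^ 2 ≠ 0 := pow_ne_zero _ (ne_of_gt ht)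
      have hh : t ^ 2 * (m1 ^ 2 + m2 ^ 2 + m3 ^ 2) = t ^ 2 * (n : ℤ) := by
        linear_combination h - (x + t * m1) * hx0 - (y + t * m2) * hy0 - (z + t * m3) * hz0
      exact mul_left_cancel₀ ht2 hh
    · have hupos : 0 < t * t' := by
        have hnn : 0 ≤ (x - t * m1) ^ 2 + (y - t * m2) ^ 2 + (z - t * m3) ^ 2 := by positivity
        rcases lt_or_eq_of_le hnn with h' | h'
        · linarith [hu]
        · exfalso; exact hz ((mul_eq_zero.mp (hu.trans h'.symm)).resolve_left (ne_of_gt ht))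
      have ht'pos : 0 < t' := by nlinarith
      have ht'lt : t' < t := by nlinarith
      have hT' : t'.natAbs ≤ T := by omega
      refine IH t' (t' * m1 + (M - (n : ℤ)) * (x - t * m1))
        (t' * m2 + (M - (n : ℤ)) * (y - t * m2))
        (t' * m3 + (M - (n : ℤ)) * (z - t * m3)) hT' ht'pos ?_
      rw [ht', hM]
      linear_combination ((m1 ^ 2 + m2 ^ 2 + m3 ^ 2 - (n:ℤ)) ^ 2) * h

lemma dc (n : ℕ) (t x y z : ℤ) (ht : t ≠ 0)
    (h : x ^ 2 + y ^ 2 + z ^ 2 = (n : ℤ) * t ^ 2) :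
    ∃ a b c : ℤ, a ^ 2 + b ^ 2 + c ^ 2 = (n : ℤ) := by
  rcases ht.lt_or_gt with hlt | hgt
  · exact dc_aux n (-t).natAbs (-t) x y z le_rfl (by omega) (by linear_combination h)
  · exact dc_aux n t.natAbs t x y z le_rfl hgt h



lemma box_pigeonhole (n q c : ℕ) (hn : 0 < n) (hq : 0 < q) (hc : 0 < c) (A B C : ℕ)
    (hcard : c * n * q < (A + 1) * ((B + 1) * (C + 1))) (σ w : ℤ) :
    ∃ X Y Z : ℤ, ¬(X = 0 ∧ Y = 0 ∧ Z = 0) ∧ X.natAbs ≤ A ∧ Y.natAbs ≤ B ∧ Z.natAbs ≤ C ∧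
      (n : ℤ) ∣ X - σ * Z ∧ (q : ℤ) ∣ X - w * Y ∧ (c : ℤ) ∣ X - Y := by
  haveI : NeZero n := ⟨hn.ne'⟩
  haveI : NeZero q := ⟨hq.ne'⟩
  haveI : NeZero c := ⟨hc.ne'⟩
  classical
  set S : Finset (ℕ × ℕ × ℕ) :=
    (Finset.range (A + 1)) ×ˢ ((Finset.range (B + 1)) ×ˢ (Finset.range (C + 1))) with hSdef
  have hS : S.card = (A + 1) * ((B + 1) * (C + 1)) := by
    simp [hSdef]
  set f : ℕ × ℕ × ℕ → (ZMod n) × (ZMod q) × (ZMod c) := fun p =>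
    ((p.1 : ZMod n) - σ * (p.2.2 : ZMod n),
      (p.1 : ZMod q) - w * (p.2.1 : ZMod q),
      (p.1 : ZMod c) - (p.2.1 : ZMod c)) with hfdef
  have hlt : (Finset.univ : Finset ((ZMod n) × (ZMod q) × (ZMod c))).card < S.card := by
    rw [hS, Finset.card_univ]
    simp only [Fintype.card_prod, ZMod.card]
    calc n * (q * c) = c * n * q := by ring
      _ < _ := hcard
  obtain ⟨p₁, hp₁, p₂, hp₂, hne, heq⟩ :=
    Finset.exists_ne_map_eq_of_card_lt_of_maps_to hlt (fun p _ => Finset.mem_univ (f p))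
  obtain ⟨a₁, b₁, c₁⟩ := p₁
  obtain ⟨a₂, b₂, c₂⟩ := p₂
  simp only [hSdef, Finset.mem_product, Finset.mem_range] at hp₁ hp₂
  refine ⟨(a₁ : ℤ) - a₂, (b₁ : ℤ) - b₂, (c₁ : ℤ) - c₂, ?_, by omega, by omega, by omega, ?_, ?_, ?_⟩
  · rintro ⟨h1, h2, h3⟩
    apply hne
    have e1 : a₁ = a₂ := by omega
    have e2 : b₁ = b₂ := by omega
    have e3 : c₁ = c₂ := by omega
    simp [e1, e2, e3]
  · have h1 := congrArg Prod.fst heq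
    simp only [hfdef] at h1
    rw [← ZMod.intCast_zmod_eq_zero_iff_dvd]
    push_cast
    linear_combination h1
  · have h2 := congrArg (fun p => p.2.1) heq
    simp only [hfdef] at h2
    rw [← ZMod.intCast_zmod_eq_zero_iff_dvd]
    push_cast
    linear_combination h2
  · have h3 := congrArg (fun p => p.2.2) heq
    simp only [hfdef] at h3
    rw [← ZMod.intCast_zmod_eq_zero_iff_dvd]
    push_cast
    linear_combination h3

lemma not_sq_of_prime_factor (q d : ℕ) (hq : q.Prime) (hnd : ¬ q ∣ d) :
    ∀ r : ℕ, r * r ≠ d * q := by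
  intro r hr
  have hqr : q ∣ r := by
    have hdvd : q ∣ r * r := ⟨d, by rw [hr]; ring⟩
    exact ((Nat.Prime.dvd_mul hq).mp hdvd).elim id id
  obtain ⟨s, rfl⟩ := hqr
  apply hnd
  refine ⟨s * s, ?_⟩
  have e : q * (q * (s * s)) = q * d := by
    calc q * (q * (s * s)) = (q * s) * (q * s) := by ring
      _ = d * q := hr
      _ = q * d := by ring
  exact (Nat.eq_of_mul_eq_mul_left hq.pos e).symm


set_option maxHeartbeats 1000000 in
lemma core (n c q : ℕ) (σ : ℤ) (hn : 2 ≤ n) (hc : c = 1 ∨ c = 2) (hq : q.Prime)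
    (hqn : 2 * n < q) (hnodd : c = 2 → n % 2 = 1)
    (hnsq : ∀ r : ℕ, r * r ≠ n)
    (hσ : (n : ℤ) ∣ σ ^ 2 + ((c * q : ℕ) : ℤ))
    (hw : IsSquare ((n : ℕ) : ZMod q)) :
    ∃ r u t : ℤ, t ≠ 0 ∧ r ^ 2 + ((c * q : ℕ) : ℤ) * u ^ 2 = (n : ℤ) * t ^ 2 := by
  haveI : NeZero q := ⟨hq.pos.ne'⟩
  have hq2 : 2 < q := by omega
  have hcpos : 0 < c := by omega
  obtain ⟨v, hv⟩ := hw
  set W : ℤ := (v.val : ℤ) with hWdef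
  have hWn : (q : ℤ) ∣ W ^ 2 - (n : ℕ) := by
    rw [← ZMod.intCast_zmod_eq_zero_iff_dvd]
    simp only [hWdef]
    push_cast
    have hvv : ((v.val : ℕ) : ZMod q) = v := ZMod.natCast_rightInverse v
    rw [hvv, hv]
    ring
  set A := Nat.sqrt (c * n * q) with hAdef
  set B := Nat.sqrt (c * q) with hBdef
  set C := Nat.sqrt n with hCdef
  have hndvd : ¬ q ∣ c * n := by
    intro hdvd
    have hle := Nat.le_of_dvd (by positivity) hdvd
    rcases hc with h | h <;> rw [h] at hle <;> omega
  have hcdvd : ¬ q ∣ c := by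
    intro hdvd
    have hle := Nat.le_of_dvd hcpos hdvd
    rcases hc with h | h <;> omega
  have hA2 : A * A < c * n * q := by
    rcases lt_or_eq_of_le (Nat.sqrt_le (c * n * q)) with h | h
    · exact h
    · rw [show c * n * q = (c * n) * q from rfl] at h
      exact absurd h (not_sq_of_prime_factor q (c * n) hq hndvd A)
  have hB2 : B * B < c * q := by
    rcases lt_or_eq_of_le (Nat.sqrt_le (c * q)) with h | h
    · exact h
    · exact absurd h (not_sq_of_prime_factor q c hq hcdvd B)
  have hC2 : C * C < n := by
    rcases lt_or_eq_of_le (Nat.sqrt_le n) with h | h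
    · exact h
    · exact absurd h (hnsq C)
  have hcard : c * n * q < (A + 1) * ((B + 1) * (C + 1)) := by
    by_contra hP
    push_neg at hP
    have h1 : c * n * q < (A + 1) * (A + 1) := Nat.lt_succ_sqrt (c * n * q)
    have h2 : c * q < (B + 1) * (B + 1) := Nat.lt_succ_sqrt (c * q)
    have h3 : n < (C + 1) * (C + 1) := Nat.lt_succ_sqrt n
    have hle : ((A + 1) * ((B + 1) * (C + 1))) * ((A + 1) * ((B + 1) * (C + 1)))
        ≤ (c * n * q) * (c * n * q) := Nat.mul_le_mul hP hP
    have k2 : (c * q) * n < ((B + 1) * (B + 1)) * ((C + 1) * (C + 1)) :=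
      mul_lt_mul'' h2 h3 (Nat.zero_le _) (Nat.zero_le _)
    have k1 : (c * n * q) * ((c * q) * n)
        < ((A + 1) * (A + 1)) * (((B + 1) * (B + 1)) * ((C + 1) * (C + 1))) :=
      mul_lt_mul'' h1 k2 (Nat.zero_le _) (Nat.zero_le _)
    have e1 : (c * n * q) * ((c * q) * n) = (c * n * q) * (c * n * q) := by ring
    have e2 : ((A + 1) * (A + 1)) * (((B + 1) * (B + 1)) * ((C + 1) * (C + 1)))
        = ((A + 1) * ((B + 1) * (C + 1))) * ((A + 1) * ((B + 1) * (C + 1))) := by ring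
    rw [e1, e2] at k1
    exact absurd k1 (not_lt.mpr hle)
  obtain ⟨X, Y, Z, hnz, hXb, hYb, hZb, hd1, hd2, hd3⟩ :=
    box_pigeonhole n q c (by omega) hq.pos hcpos A B C hcard σ W
  set F : ℤ := X ^ 2 - ((n : ℕ) : ℤ) * Y ^ 2 + ((c * q : ℕ) : ℤ) * Z ^ 2 with hFdef
  obtain ⟨α, hα⟩ := hd1
  obtain ⟨β, hβ⟩ := hσ
  obtain ⟨γ, hγ⟩ := hd2
  obtain ⟨δ, hδ⟩ := hWn
  have hfn : (n : ℤ) ∣ F := by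
    refine ⟨α * (X + σ * Z) + β * Z ^ 2 - Y ^ 2, ?_⟩
    rw [hFdef]
    push_cast
    push_cast at hβ
    linear_combination (X + σ * Z) * hα + Z ^ 2 * hβ
  have hfq : (q : ℤ) ∣ F := by
    refine ⟨γ * (X + W * Y) + δ * Y ^ 2 + (c : ℕ) * Z ^ 2, ?_⟩
    rw [hFdef]
    push_cast
    push_cast at hδ
    linear_combination (X + W * Y) * hγ + Y ^ 2 * hδ
  have hfc : (c : ℤ) ∣ F := by
    rcases hc with h1 | h2
    · rw [h1]; exact one_dvd _
    · obtain ⟨γ₂, hγ₂⟩ := hd3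
      rw [h2] at hγ₂
      obtain ⟨e, he⟩ : (2 : ℤ) ∣ (n : ℤ) - 1 := by
        have := hnodd h2
        omega
      rw [h2]
      refine ⟨γ₂ * (X + Y) - e * Y ^ 2 + (q : ℕ) * Z ^ 2, ?_⟩
      rw [hFdef, h2]
      push_cast
      linear_combination (X + Y) * hγ₂ - Y ^ 2 * he
  have hqo : q % 2 = 1 := Nat.odd_iff.mp (hq.odd_of_ne_two (by omega))
  have hnq_cop : IsCoprime (n : ℤ) (q : ℤ) := by
    rw [Nat.isCoprime_iff_coprime]
    have hnotdvd : ¬ q ∣ n := fun hdvd => by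
      have := Nat.le_of_dvd (by omega) hdvd
      omega
    exact Nat.coprime_comm.mp ((Nat.Prime.coprime_iff_not_dvd hq).mpr hnotdvd)
  have hnqF : ((n : ℤ) * (q : ℤ)) ∣ F := hnq_cop.mul_dvd hfn hfq
  have hcnqF : ((c : ℤ) * ((n : ℤ) * (q : ℤ))) ∣ F := by
    rcases hc with h1 | h2
    · rw [h1]
      simpa using hnqF
    · have hcop2 : IsCoprime (c : ℤ) ((n * q : ℕ) : ℤ) := by
        rw [Nat.isCoprime_iff_coprime, h2]
        have hno : n % 2 = 1 := hnodd h2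
        have hmod : (n * q) % 2 = 1 := by
          rw [Nat.mul_mod, hno, hqo]
        have : ¬ (2 : ℕ) ∣ n * q := by omega
        exact (Nat.Prime.coprime_iff_not_dvd Nat.prime_two).mpr this
      push_cast at hcop2
      exact hcop2.mul_dvd hfc hnqF
  obtain ⟨d, hd⟩ := hcnqF
  -- bounds
  have hNpos : (0 : ℤ) < (n : ℤ) := by exact_mod_cast (by omega : 0 < n)
  have hCQpos : (0 : ℤ) < (c : ℤ) * (q : ℤ) := by positivity
  have hPpos : (0 : ℤ) < (c : ℤ) * ((n : ℤ) * (q : ℤ)) := by positivity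
  have hsq : ∀ (T : ℤ) (m M : ℕ), T.natAbs ≤ m → m * m < M → T ^ 2 < (M : ℤ) := by
    intro T m M h1 h2
    have e1 : T ^ 2 = ((T.natAbs : ℕ) : ℤ) ^ 2 := (Int.natAbs_sq T).symm
    have e2 : (T.natAbs : ℤ) ≤ (m : ℤ) := by exact_mod_cast h1
    have e3 : ((m : ℤ)) * (m : ℤ) < (M : ℤ) := by exact_mod_cast h2
    have e4 : ((T.natAbs : ℕ) : ℤ) ^ 2 ≤ (m : ℤ) ^ 2 :=
      pow_le_pow_left₀ (by positivity) e2 2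
    have e5 : (m : ℤ) ^ 2 = (m : ℤ) * (m : ℤ) := sq (m : ℤ)
    rw [e1]
    rw [e5] at e4
    linarith
  have hX2 : X ^ 2 < ((c : ℤ) * ((n : ℤ) * (q : ℤ))) := by
    have := hsq X A (c * n * q) hXb hA2
    push_cast at this
    linarith
  have hY2 : Y ^ 2 < (c : ℤ) * (q : ℤ) := by
    have := hsq Y B (c * q) hYb hB2
    push_cast at this
    linarith
  have hZ2 : Z ^ 2 < (n : ℤ) := by
    have := hsq Z C n hZb hC2
    push_cast at this
    linarith
  have hFlow : -((c : ℤ) * ((n : ℤ) * (q : ℤ))) < F := by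
    rw [hFdef]
    push_cast
    have h1 : (n : ℤ) * Y ^ 2 < (c : ℤ) * ((n : ℤ) * (q : ℤ)) := by
      calc (n : ℤ) * Y ^ 2 < (n : ℤ) * ((c : ℤ) * (q : ℤ)) :=
            mul_lt_mul_of_pos_left hY2 hNpos
        _ = (c : ℤ) * ((n : ℤ) * (q : ℤ)) := by ring
    have h2 : 0 ≤ (c : ℤ) * (q : ℤ) * Z ^ 2 := mul_nonneg (le_of_lt hCQpos) (sq_nonneg Z)
    linarith [sq_nonneg X]
  have hFhigh : F < 2 * ((c : ℤ) * ((n : ℤ) * (q : ℤ))) := by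
    rw [hFdef]
    push_cast
    have h1 : (c : ℤ) * (q : ℤ) * Z ^ 2 < (c : ℤ) * ((n : ℤ) * (q : ℤ)) := by
      calc (c : ℤ) * (q : ℤ) * Z ^ 2 < (c : ℤ) * (q : ℤ) * (n : ℤ) :=
            mul_lt_mul_of_pos_left hZ2 hCQpos
        _ = (c : ℤ) * ((n : ℤ) * (q : ℤ)) := by ring
    have h2 : 0 ≤ (n : ℤ) * Y ^ 2 := mul_nonneg (le_of_lt hNpos) (sq_nonneg Y)
    linarith [hX2]
  have hd01 : d = 0 ∨ d = 1 := by
    rw [hd] at hFlow hFhigh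
    have hd0 : 0 ≤ d := by
      by_contra hneg
      push_neg at hneg
      have hle : (c : ℤ) * ((n : ℤ) * (q : ℤ)) * d ≤ (c : ℤ) * ((n : ℤ) * (q : ℤ)) * (-1) :=
        mul_le_mul_of_nonneg_left (by omega) (le_of_lt hPpos)
      linarith
    have hd1' : d ≤ 1 := by
      by_contra hbig
      push_neg at hbig
      have hle : (c : ℤ) * ((n : ℤ) * (q : ℤ)) * 2 ≤ (c : ℤ) * ((n : ℤ) * (q : ℤ)) * d :=
        mul_le_mul_of_nonneg_left (by omega) (le_of_lt hPpos)
      linarith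
    omega
  rcases hd01 with h0 | h1
  · rw [h0, mul_zero] at hd
    have hYne : Y ≠ 0 := by
      intro hY0
      rw [hFdef, hY0] at hd
      push_cast at hd
      have hz2 : 0 ≤ (c : ℤ) * (q : ℤ) * Z ^ 2 := mul_nonneg (le_of_lt hCQpos) (sq_nonneg Z)
      have hXz : X ^ 2 = 0 := by linarith [sq_nonneg X]
      have h3 : (c : ℤ) * (q : ℤ) * Z ^ 2 = 0 := by linarith [sq_nonneg X]
      have hZz : Z ^ 2 = 0 := by
        rcases mul_eq_zero.mp h3 with h | h
        · exact absurd h (ne_of_gt hCQpos)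
        · exact h
      exact hnz ⟨pow_eq_zero_iff two_ne_zero |>.mp hXz, hY0,
        pow_eq_zero_iff two_ne_zero |>.mp hZz⟩
    refine ⟨X, Z, Y, hYne, ?_⟩
    rw [hFdef] at hd
    push_cast at hd ⊢
    linarith
  · rw [h1, mul_one] at hd
    refine ⟨X * Y + ((c * q : ℕ) : ℤ) * Z, X - Y * Z, Y ^ 2 + ((c * q : ℕ) : ℤ), ?_, ?_⟩
    · have : (0 : ℤ) < Y ^ 2 + ((c * q : ℕ) : ℤ) := by
        push_cast
        nlinarith [sq_nonneg Y, hCQpos]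
      exact ne_of_gt this
    · rw [hFdef] at hd
      push_cast at hd ⊢
      linear_combination (Y ^ 2 + (c : ℤ) * (q : ℤ)) * hd

lemma S3_even (j : ℕ) (hj : j % 2 = 1) :
    ∃ x y z : ℤ, x ^ 2 + y ^ 2 + z ^ 2 = ((2 * j : ℕ) : ℤ) := by
  by_cases hj1 : j = 1
  · exact ⟨1, 1, 0, by rw [hj1]; norm_num⟩
  have hj3 : 3 ≤ j := by omega
  obtain ⟨ε, hεfacts⟩ : ∃ e : ℕ, (j % 4 = 1 ∧ e = 1) ∨ (j % 4 = 3 ∧ e = 5) := by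
    rcases (by omega : j % 4 = 1 ∨ j % 4 = 3) with h | h
    · exact ⟨1, Or.inl ⟨h, rfl⟩⟩
    · exact ⟨5, Or.inr ⟨h, rfl⟩⟩
  have hεodd : ε % 2 = 1 := by rcases hεfacts with ⟨_, h⟩ | ⟨_, h⟩ <;> omega
  have hεlt : ε < 8 := by rcases hεfacts with ⟨_, h⟩ | ⟨_, h⟩ <;> omega
  have hcop8j : Nat.Coprime 8 j := by
    have h2 : Nat.Coprime 2 j := (Nat.Prime.coprime_iff_not_dvd Nat.prime_two).mpr (by omega)
    have := Nat.Coprime.pow_left 3 h2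
    norm_num at this
    exact this
  obtain ⟨K, hK8, hKj⟩ := Nat.chineseRemainder hcop8j ε (j - 1)
  have hK8' : K % 8 = ε := by
    have : K % 8 = ε % 8 := hK8
    omega
  have hKodd : K % 2 = 1 := by omega
  have hKj' : K % j = j - 1 := by
    have h1 : K % j = (j - 1) % j := hKj
    have h2 : (j - 1) % j = j - 1 := Nat.mod_eq_of_lt (by omega)
    omega
  haveI : NeZero (8 * j) := ⟨by omega⟩
  have hKcop : Nat.Coprime K (8 * j) := by
    apply Nat.Coprime.mul_right
    · have h2 : Nat.Coprime K 2 := by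
        rw [Nat.coprime_comm]
        exact (Nat.Prime.coprime_iff_not_dvd Nat.prime_two).mpr (by omega)
      have := Nat.Coprime.pow_right 3 h2
      norm_num at this
      exact this
    · have hsucc : Nat.Coprime (j - 1) j := by
        have h1 : Nat.Coprime (1 + (j - 1)) (j - 1) :=
          Nat.coprime_add_self_left.mpr (Nat.coprime_one_left _)
        have e : 1 + (j - 1) = j := by omega
        rw [e] at h1
        exact h1.symm
      have hgcd : Nat.Coprime j K := by
        unfold Nat.Coprime
        rw [Nat.gcd_rec, hKj']
        exact hsucc
      exact hgcd.symm
  have hunit : IsUnit (K : ZMod (8 * j)) := by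
    rw [ZMod.isUnit_iff_coprime]
    exact hKcop
  obtain ⟨q, hqgt, hqprime, hqmod⟩ := Nat.forall_exists_prime_gt_and_eq_mod hunit (8 * j)
  haveI : Fact q.Prime := ⟨hqprime⟩
  have hqK : q ≡ K [MOD 8 * j] := (ZMod.natCast_eq_natCast_iff q K (8 * j)).mp hqmod
  have hq8 : q % 8 = ε := by
    have h1 : q ≡ K [MOD 8] := Nat.ModEq.of_dvd ⟨j, rfl⟩ hqK
    have : q % 8 = K % 8 := h1
    omega
  have hq4 : q % 4 = 1 := by omega
  have hqj : q % j = j - 1 := by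
    have h1 : q ≡ K [MOD j] := Nat.ModEq.of_dvd ⟨8, by ring⟩ hqK
    have : q % j = K % j := h1
    omega
  have hjdvd : j ∣ q + 1 := by
    apply Nat.dvd_of_mod_eq_zero
    rw [Nat.add_mod, hqj, Nat.mod_eq_of_lt (show (1:ℕ) < j by omega)]
    have e : j - 1 + 1 = j := by omega
    rw [e, Nat.mod_self]
  have hqodd : q % 2 = 1 := by omega
  have h2jdvd : 2 * j ∣ q + 1 := by
    have h2 : 2 ∣ q + 1 := by omega
    have hc : Nat.Coprime 2 j := (Nat.Prime.coprime_iff_not_dvd Nat.prime_two).mpr (by omega)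
    exact Nat.Coprime.mul_dvd_of_dvd_of_dvd hc h2 hjdvd
  -- jacobi symbol computation
  have hjodd : Odd j := Nat.odd_iff.mpr hj
  have hqodd' : Odd q := Nat.odd_iff.mpr hqodd
  have hmodint : ((q : ℤ)) % ((j : ℕ) : ℤ) = (-1 : ℤ) % ((j : ℕ) : ℤ) := by
    have hdvd : ((j : ℕ) : ℤ) ∣ (-1 : ℤ) - (q : ℤ) := by
      have : ((j : ℕ) : ℤ) ∣ ((q + 1 : ℕ) : ℤ) := Int.natCast_dvd_natCast.mpr hjdvd
      push_cast at this
      obtain ⟨m, hm⟩ := this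
      exact ⟨-m, by linarith⟩
    exact Int.ModEq.symm (Int.modEq_iff_dvd.mpr hdvd) |>.symm
  have hjac : legendreSym q ((2 * j : ℕ) : ℤ) = 1 := by
    rw [jacobiSym.legendreSym.to_jacobiSym]
    have e1 : ((2 * j : ℕ) : ℤ) = (2 : ℤ) * (j : ℕ) := by norm_num
    rw [e1, jacobiSym.mul_left, jacobiSym.at_two hqodd']
    have e2 : jacobiSym ((j : ℕ) : ℤ) q = jacobiSym ((q : ℕ) : ℤ) j :=
      (jacobiSym.quadratic_reciprocity_one_mod_four hq4 hjodd).symm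
    rw [e2, jacobiSym.mod_left' hmodint, jacobiSym.at_neg_one hjodd]
    rw [ZMod.χ₈_nat_eq_if_mod_eight, ZMod.χ₄_nat_eq_if_mod_four]
    rcases hεfacts with ⟨h4, hε⟩ | ⟨h4, hε⟩
    · rw [hq8, hε]
      simp [hj, h4, hqodd]
    · rw [hq8, hε]
      simp [hj, h4, hqodd]
  have hw : IsSquare ((2 * j : ℕ) : ZMod q) := by
    have hne : ((2 * j : ℕ) : ZMod q) ≠ 0 := by
      rw [Ne, ZMod.natCast_eq_zero_iff]
      intro hdvd
      have := Nat.le_of_dvd (by omega) hdvd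
      omega
    exact (legendreSym.eq_one_iff' q hne).mp hjac
  have hσ : ((2 * j : ℕ) : ℤ) ∣ (1 : ℤ) ^ 2 + ((1 * q : ℕ) : ℤ) := by
    obtain ⟨m, hm⟩ := h2jdvd
    refine ⟨(m : ℤ), ?_⟩
    have := congrArg (fun t : ℕ => (t : ℤ)) hm
    push_cast at this ⊢
    linarith
  have hnsq : ∀ r : ℕ, r * r ≠ 2 * j := by
    intro r h
    rcases Nat.even_or_odd r with he | ho
    · obtain ⟨s, rfl⟩ := he
      have h2 : 2 * (2 * (s * s)) = 2 * j := by rw [← h]; ring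
      omega
    · obtain ⟨s, rfl⟩ := ho
      have h2 : 2 * (2 * (s * s) + 2 * s) + 1 = 2 * j := by rw [← h]; ring
      omega
  obtain ⟨r, u, t, ht, hr⟩ := core (2 * j) 1 q 1 (by omega) (Or.inl rfl) hqprime
    (by omega) (by omega) hnsq hσ hw
  obtain ⟨a, b, hab⟩ := Nat.Prime.sq_add_sq (p := q) (by omega)
  have hab' : ((a : ℤ)) ^ 2 + (b : ℤ) ^ 2 = (q : ℤ) := by exact_mod_cast hab
  refine dc (2 * j) t r ((a : ℤ) * u) ((b : ℤ) * u) ht ?_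
  push_cast at hr ⊢
  linear_combination hr + u ^ 2 * hab'



lemma S3_odd (n : ℕ) (hn : n % 4 = 1 ∨ n % 8 = 3) :
    ∃ x y z : ℤ, x ^ 2 + y ^ 2 + z ^ 2 = (n : ℤ) := by
  by_cases hsq : ∃ r : ℕ, r * r = n
  · obtain ⟨r, hr⟩ := hsq
    exact ⟨(r : ℤ), 0, 0, by push_cast [← hr]; ring⟩
  push_neg at hsq
  have hodd : n % 2 = 1 := by omega
  have hn1 : n ≠ 1 := by
    intro h
    exact hsq 1 (by rw [h])
  have hn3 : 3 ≤ n := by omega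
  -- choose the shift s (1 for n % 4 = 1, 2 for n % 8 = 3) and multiplier c
  obtain ⟨s, c, hsc⟩ : ∃ s c : ℕ, (n % 4 = 1 ∧ s = 1 ∧ c = 1) ∨ (n % 8 = 3 ∧ s = 2 ∧ c = 2) := by
    rcases hn with h | h
    · exact ⟨1, 1, Or.inl ⟨h, rfl, rfl⟩⟩
    · exact ⟨2, 2, Or.inr ⟨h, rfl, rfl⟩⟩
  have hcop4n : Nat.Coprime 4 n := by
    have h2 : Nat.Coprime 2 n := (Nat.Prime.coprime_iff_not_dvd Nat.prime_two).mpr (by omega)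
    have := Nat.Coprime.pow_left 2 h2
    norm_num at this
    exact this
  obtain ⟨K, hK4, hKn⟩ := Nat.chineseRemainder hcop4n 1 (n - s)
  have hs2 : s = 1 ∨ s = 2 := by rcases hsc with ⟨_, h, _⟩ | ⟨_, h, _⟩ <;> omega
  have hslb : 1 ≤ s := by rcases hs2 with h | h <;> omega
  have hsub : s ≤ 2 := by rcases hs2 with h | h <;> omega
  have hK4' : K % 4 = 1 := by
    have h1 : K % 4 = 1 % 4 := hK4
    omega
  have hKn' : K % n = n - s := by
    have h1 : K % n = (n - s) % n := hKn
    have h2 : (n - s) % n = n - s := Nat.mod_eq_of_lt (by omega)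
    omega
  haveI : NeZero (4 * n) := ⟨by omega⟩
  have hKcop : Nat.Coprime K (4 * n) := by
    apply Nat.Coprime.mul_right
    · have h2 : Nat.Coprime K 2 := by
        rw [Nat.coprime_comm]
        exact (Nat.Prime.coprime_iff_not_dvd Nat.prime_two).mpr (by omega)
      have := Nat.Coprime.pow_right 2 h2
      norm_num at this
      exact this
    · have hsucc : Nat.Coprime (n - s) n := by
        have h1 : Nat.Coprime (n - s) (s + (n - s)) := by
          rw [Nat.coprime_add_self_right]
          rcases hs2 with h | h
          · rw [h]; exact Nat.coprime_one_right _
          · rw [h]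
            rw [Nat.coprime_comm]
            exact (Nat.Prime.coprime_iff_not_dvd Nat.prime_two).mpr (by omega)
        have e : s + (n - s) = n := by omega
        rw [e] at h1
        exact h1
      have hgcd : Nat.Coprime n K := by
        unfold Nat.Coprime
        rw [Nat.gcd_rec, hKn']
        exact hsucc
      exact hgcd.symm
  have hunit : IsUnit (K : ZMod (4 * n)) := by
    rw [ZMod.isUnit_iff_coprime]
    exact hKcop
  obtain ⟨q, hqgt, hqprime, hqmod⟩ := Nat.forall_exists_prime_gt_and_eq_mod hunit (4 * n)
  haveI : Fact q.Prime := ⟨hqprime⟩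
  have hqK : q ≡ K [MOD 4 * n] := (ZMod.natCast_eq_natCast_iff q K (4 * n)).mp hqmod
  have hq4 : q % 4 = 1 := by
    have h1 : q ≡ K [MOD 4] := Nat.ModEq.of_dvd ⟨n, rfl⟩ hqK
    have : q % 4 = K % 4 := h1
    omega
  have hqn : q % n = n - s := by
    have h1 : q ≡ K [MOD n] := Nat.ModEq.of_dvd ⟨4, by ring⟩ hqK
    have : q % n = K % n := h1
    omega
  have hqodd : q % 2 = 1 := by omega
  have hndvd : n ∣ q + s := by
    apply Nat.dvd_of_mod_eq_zero
    rw [Nat.add_mod, hqn, Nat.mod_eq_of_lt (show s < n by omega)]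
    have e : n - s + s = n := by omega
    rw [e, Nat.mod_self]
  have hnodd' : Odd n := Nat.odd_iff.mpr hodd
  have hqodd' : Odd q := Nat.odd_iff.mpr hqodd
  have hmodint : ((q : ℤ)) % ((n : ℕ) : ℤ) = (-(s : ℤ)) % ((n : ℕ) : ℤ) := by
    have hdvd : ((n : ℕ) : ℤ) ∣ (-(s : ℤ)) - (q : ℤ) := by
      have : ((n : ℕ) : ℤ) ∣ ((q + s : ℕ) : ℤ) := Int.natCast_dvd_natCast.mpr hndvd
      push_cast at this
      obtain ⟨m, hm⟩ := this
      exact ⟨-m, by linarith⟩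
    exact Int.ModEq.symm (Int.modEq_iff_dvd.mpr hdvd) |>.symm
  have hjac : legendreSym q ((n : ℕ) : ℤ) = 1 := by
    rw [jacobiSym.legendreSym.to_jacobiSym]
    have e2 : jacobiSym ((n : ℕ) : ℤ) q = jacobiSym ((q : ℕ) : ℤ) n :=
      (jacobiSym.quadratic_reciprocity_one_mod_four hq4 hnodd').symm
    rw [e2, jacobiSym.mod_left' hmodint]
    rcases hsc with ⟨h4, hs, hc⟩ | ⟨h8, hs, hc⟩
    · rw [hs]
      have e3 : (-((1 : ℕ) : ℤ)) = -1 := by norm_num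
      rw [e3, jacobiSym.at_neg_one hnodd', ZMod.χ₄_nat_eq_if_mod_four]
      simp [hodd, h4]
    · rw [hs]
      have e3 : (-((2 : ℕ) : ℤ)) = (-1) * 2 := by norm_num
      rw [e3, jacobiSym.mul_left, jacobiSym.at_neg_one hnodd', jacobiSym.at_two hnodd',
        ZMod.χ₄_nat_eq_if_mod_four, ZMod.χ₈_nat_eq_if_mod_eight]
      have h4 : n % 4 = 3 := by omega
      simp [hodd, h4, h8]
  have hw : IsSquare ((n : ℕ) : ZMod q) := by
    have hne : ((n : ℕ) : ZMod q) ≠ 0 := by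
      rw [Ne, ZMod.natCast_eq_zero_iff]
      intro hdvd
      have := Nat.le_of_dvd (by omega) hdvd
      omega
    exact (legendreSym.eq_one_iff' q hne).mp hjac
  have hσ : ((n : ℕ) : ℤ) ∣ ((s : ℤ)) ^ 2 + ((c * q : ℕ) : ℤ) := by
    obtain ⟨m, hm⟩ := hndvd
    refine ⟨(s : ℤ) * m, ?_⟩
    have hcast := congrArg (fun t : ℕ => (t : ℤ)) hm
    push_cast at hcast ⊢
    have hcs : (c : ℤ) = (s : ℤ) := by
      rcases hsc with ⟨_, h1, h2⟩ | ⟨_, h1, h2⟩ <;> rw [h1, h2]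
    rw [hcs]
    linear_combination (s : ℤ) * hcast
  have hnsq : ∀ r : ℕ, r * r ≠ n := hsq
  obtain ⟨r, u, t, ht, hr⟩ := core n c q (s : ℤ) (by omega) (by rcases hsc with ⟨_,_,h⟩|⟨_,_,h⟩ <;> omega) hqprime
    (by omega) (fun _ => hodd) hnsq hσ hw
  obtain ⟨a, b, hab⟩ := Nat.Prime.sq_add_sq (p := q) (by omega)
  have hab' : ((a : ℤ)) ^ 2 + (b : ℤ) ^ 2 = (q : ℤ) := by exact_mod_cast hab
  rcases hsc with ⟨h4, hs, hc⟩ | ⟨h8, hs, hc⟩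
  · rw [hc] at hr
    refine dc n t r ((a : ℤ) * u) ((b : ℤ) * u) ht ?_
    push_cast at hr ⊢
    linear_combination hr + u ^ 2 * hab'
  · rw [hc] at hr
    refine dc n t r (((a : ℤ) + b) * u) (((a : ℤ) - b) * u) ht ?_
    push_cast at hr ⊢
    linear_combination hr + 2 * u ^ 2 * hab'


lemma S3_scale (m : ℕ) (h : ∃ x y z : ℤ, x ^ 2 + y ^ 2 + z ^ 2 = (m : ℤ)) :
    ∃ x y z : ℤ, x ^ 2 + y ^ 2 + z ^ 2 = ((4 * m : ℕ) : ℤ) := by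
  obtain ⟨x, y, z, hh⟩ := h
  refine ⟨2 * x, 2 * y, 2 * z, ?_⟩
  push_cast
  linear_combination (4 : ℤ) * hh

lemma S3_two_k (k : ℕ) (hk : k % 4 ≠ 0) (h16 : k % 16 ≠ 14) :
    ∃ x y z : ℤ, x ^ 2 + y ^ 2 + z ^ 2 = ((2 * k : ℕ) : ℤ) := by
  rcases (by omega : k % 2 = 1 ∨ k % 4 = 2) with h | h
  · exact S3_even k h
  · obtain ⟨k', rfl⟩ : ∃ k', k = 2 * k' := ⟨k / 2, by omega⟩
    have hodd : k' % 4 = 1 ∨ k' % 8 = 3 := by omega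
    have h3 := S3_scale k' (S3_odd k' hodd)
    have e : 4 * k' = 2 * (2 * k') := by ring
    rwa [e] at h3

lemma parity_split (m : ℕ) (x y z : ℤ) (h : x ^ 2 + y ^ 2 + z ^ 2 = ((2 * m : ℕ) : ℤ)) :
    ∃ a b c : ℤ, a ^ 2 + b ^ 2 + 2 * c ^ 2 = (m : ℤ) := by
  have hm : ((2 * m : ℕ) : ℤ) = 2 * (m : ℤ) := by push_cast; ring
  rw [hm] at h
  have heven : Even (2 * (m : ℤ)) := ⟨m, two_mul _⟩
  rcases Int.even_or_odd x with hx | hx <;> rcases Int.even_or_odd y with hy | hy <;>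
    rcases Int.even_or_odd z with hz | hz
  · -- E E E
    obtain ⟨a, rfl⟩ := hx; obtain ⟨b, rfl⟩ := hy; obtain ⟨c, rfl⟩ := hz
    refine ⟨a + b, a - b, c, ?_⟩
    have h2 : 2 * ((a + b) ^ 2 + (a - b) ^ 2 + 2 * c ^ 2) = 2 * (m : ℤ) := by
      linear_combination h
    exact mul_left_cancel₀ two_ne_zero h2
  · -- E E O : pair x,y
    obtain ⟨a, rfl⟩ := hx; obtain ⟨b, rfl⟩ := hy; obtain ⟨c, rfl⟩ := hz
    exfalso
    have h2 : (2 : ℤ) * (2 * a ^ 2 + 2 * b ^ 2 + 2 * c ^ 2 + 2 * c) + 1 = 2 * (m : ℤ) := by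
      linear_combination h
    omega
  · -- E O E
    obtain ⟨a, rfl⟩ := hx; obtain ⟨b, rfl⟩ := hy; obtain ⟨c, rfl⟩ := hz
    exfalso
    have h2 : (2 : ℤ) * (2 * a ^ 2 + 2 * b ^ 2 + 2 * b + 2 * c ^ 2) + 1 = 2 * (m : ℤ) := by
      linear_combination h
    omega
  · -- E O O : pair y,z
    obtain ⟨a, rfl⟩ := hx; obtain ⟨b, rfl⟩ := hy; obtain ⟨c, rfl⟩ := hz
    refine ⟨b + c + 1, b - c, a, ?_⟩
    have h2 : 2 * ((b + c + 1) ^ 2 + (b - c) ^ 2 + 2 * a ^ 2) = 2 * (m : ℤ) := by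
      linear_combination h
    exact mul_left_cancel₀ two_ne_zero h2
  · -- O E E
    obtain ⟨a, rfl⟩ := hx; obtain ⟨b, rfl⟩ := hy; obtain ⟨c, rfl⟩ := hz
    exfalso
    have h2 : (2 : ℤ) * (2 * a ^ 2 + 2 * a + 2 * b ^ 2 + 2 * c ^ 2) + 1 = 2 * (m : ℤ) := by
      linear_combination h
    omega
  · -- O E O : pair x,z
    obtain ⟨a, rfl⟩ := hx; obtain ⟨b, rfl⟩ := hy; obtain ⟨c, rfl⟩ := hz
    refine ⟨a + c + 1, a - c, b, ?_⟩
    have h2 : 2 * ((a + c + 1) ^ 2 + (a - c) ^ 2 + 2 * b ^ 2) = 2 * (m : ℤ) := by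
      linear_combination h
    exact mul_left_cancel₀ two_ne_zero h2
  · -- O O E : pair x,y
    obtain ⟨a, rfl⟩ := hx; obtain ⟨b, rfl⟩ := hy; obtain ⟨c, rfl⟩ := hz
    refine ⟨a + b + 1, a - b, c, ?_⟩
    have h2 : 2 * ((a + b + 1) ^ 2 + (a - b) ^ 2 + 2 * c ^ 2) = 2 * (m : ℤ) := by
      linear_combination h
    exact mul_left_cancel₀ two_ne_zero h2
  · -- O O O
    obtain ⟨a, rfl⟩ := hx; obtain ⟨b, rfl⟩ := hy; obtain ⟨c, rfl⟩ := hz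
    exfalso
    have h2 : (2 : ℤ) * (2 * a ^ 2 + 2 * a + 2 * b ^ 2 + 2 * b + 2 * c ^ 2 + 2 * c + 1) + 1
        = 2 * (m : ℤ) := by
      linear_combination h
    omega

lemma Q4_univ (k : ℕ) :
    ∃ a b c d : ℤ, (a + b + c + d) ^ 2 + (a ^ 2 + b ^ 2 + c ^ 2 + d ^ 2) = 2 * (k : ℤ) := by
  induction k using Nat.strong_induction_on with
  | _ k IH =>
  by_cases hk0 : k = 0
  · exact ⟨0, 0, 0, 0, by rw [hk0]; norm_num⟩
  by_cases h4 : k % 4 = 0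
  · obtain ⟨k', rfl⟩ : ∃ k', k = 4 * k' := ⟨k / 4, by omega⟩
    obtain ⟨a, b, c, d, h⟩ := IH k' (by omega)
    refine ⟨2 * a, 2 * b, 2 * c, 2 * d, ?_⟩
    push_cast
    linear_combination (4 : ℤ) * h
  by_cases h16 : k % 16 = 14
  · obtain ⟨w, hw⟩ : ∃ w, k - 10 = 4 * w := ⟨(k - 10) / 4, by omega⟩
    have hwodd : w % 2 = 1 := by omega
    have h1 := S3_scale (2 * w) (S3_even w hwodd)
    have e : 4 * (2 * w) = 2 * (k - 10) := by omega
    rw [e] at h1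
    obtain ⟨x, y, z, hxyz⟩ := h1
    obtain ⟨a, b, c, h3⟩ := parity_split (k - 10) x y z hxyz
    have hcast : ((k - 10 : ℕ) : ℤ) = (k : ℤ) - 10 := by
      have : (10 : ℕ) ≤ k := by omega
      push_cast [Nat.cast_sub this]
      ring
    rw [hcast] at h3
    refine ⟨a - c - 1, b + c - 1, c - b - 1, 4, ?_⟩
    linear_combination 2 * h3
  · obtain ⟨x, y, z, hxyz⟩ := S3_two_k k h4 h16
    obtain ⟨a, b, c, h3⟩ := parity_split k x y z hxyz
    refine ⟨a - c, b + c, c - b, 0, ?_⟩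
    linear_combination 2 * h3


end Stmt6

theorem stmt_6 (n : ℕ) (hn : 5 ≤ n) (k : ℕ) :
    ∃ x : Fin (n - 1) → ℤ,
      (∑ i, (x i) ^ 2) + (∑ i, ∑ j ∈ Finset.Ioi i, x i * x j) = (k : ℤ) := by
  have hN : 4 ≤ n - 1 := by omega
  obtain ⟨a, b, c, d, h⟩ := Stmt6.Q4_univ k
  exact Stmt6.realize hN (k : ℤ) a b c d h
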